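/- There exists a unique formal power series v ∈ ℚ⟦x⟧ with zero constant coefficient such that 6x = (1 − 9v + 18v²)·v; its expansion begins v = 6x + 324x² + 31104x³ + ⋯. Moreover, setting w := x·(1 − 6v)⁻¹ ∈ ℚ⟦x⟧ (note 1 − 6v is invertible since it has constant term 1), one has (1 − 6v)² = 1 − 72w and x² = w² − 72w³; the series w = x + 36x² + 3240x³ + ⋯ is the unique formal power series with constant coefficient 0 and coefficient of x equal to 1 satisfying x² = w² − 72w³; and w·(1 − 108w)·D(w) = x, where D is the formal derivative d/dx. -/

import Mathlib

open PowerSeries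

lemma mem_span_X_pow {n : ℕ} {f : PowerSeries ℚ} :
    f ∈ (Ideal.span {(X : PowerSeries ℚ)}) ^ n ↔ ∀ m < n, coeff m f = 0 := by
  rw [Ideal.span_singleton_pow, Ideal.mem_span_singleton, PowerSeries.X_pow_dvd_iff]

instance adicQQ : IsAdicComplete (Ideal.span {(X : PowerSeries ℚ)}) (PowerSeries ℚ) where
  haus' := by
    intro x hx
    ext m
    have h := hx (m + 1)
    rw [SModEq.zero, smul_eq_mul, Ideal.mul_top, mem_span_X_pow] at h
    simpa using h m (Nat.lt_succ_self m)
  prec' := by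
    intro f hf
    refine ⟨PowerSeries.mk fun k => coeff k (f (k + 1)), fun n => ?_⟩
    rw [SModEq.sub_mem, smul_eq_mul, Ideal.mul_top, mem_span_X_pow]
    intro m hm
    have h := hf (hm : m + 1 ≤ n)
    rw [SModEq.sub_mem, smul_eq_mul, Ideal.mul_top, mem_span_X_pow] at h
    have := h m (Nat.lt_succ_self m)
    simp only [map_sub, PowerSeries.coeff_mk] at this ⊢
    linarith [this]

lemma exists_v : ∃ v : PowerSeries ℚ, constantCoeff v = 0 ∧
    6 * X = (1 - 9 * v + 18 * v ^ 2) * v := by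
  set I : Ideal (PowerSeries ℚ) := Ideal.span {(X : PowerSeries ℚ)} with hI
  set f : Polynomial (PowerSeries ℚ) :=
    Polynomial.X ^ 3 + (Polynomial.C (C (-1/2)) * Polynomial.X ^ 2 +
      Polynomial.C (C (1/18)) * Polynomial.X + Polynomial.C (-(C (1/3) * X))) with hf
  have hmon : f.Monic := by
    apply Polynomial.monic_X_pow_add
    exact lt_of_le_of_lt Polynomial.degree_quadratic_le (by norm_num)
  have heval : f.eval 0 ∈ I := by
    simp only [hf, Polynomial.eval_add, Polynomial.eval_mul, Polynomial.eval_pow,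
      Polynomial.eval_X, Polynomial.eval_C]
    simp only [hI]
    rw [Ideal.mem_span_singleton]
    ring_nf
    exact ⟨-(C (1/3)), by ring⟩
  have hderiv : IsUnit (Ideal.Quotient.mk I (f.derivative.eval 0)) := by
    have : f.derivative.eval 0 = C (1/18) := by
      simp [hf]
    rw [this]
    exact ((isUnit_iff_ne_zero.mpr (by norm_num : (1/18 : ℚ) ≠ 0)).map C).map
      (Ideal.Quotient.mk I)
  obtain ⟨a, ha, haI⟩ := HenselianRing.is_henselian f hmon 0 heval hderiv
  refine ⟨a, ?_, ?_⟩
  · rw [sub_zero, hI, Ideal.mem_span_singleton, PowerSeries.X_dvd_iff] at haI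
    exact haI
  · have heq : a ^ 3 + (C (-1/2) * a ^ 2 + C (1/18) * a + -(C (1/3) * X)) = 0 := by
      have := ha
      simpa [hf, Polynomial.IsRoot, Polynomial.eval_add, Polynomial.eval_mul] using this
    have e1 : (18 : PowerSeries ℚ) * C (-1/2) = -9 := by
      rw [show (18 : PowerSeries ℚ) = C 18 from (map_ofNat C 18).symm, ← map_mul,
        show (18 * (-1/2) : ℚ) = -9 by norm_num, map_neg, map_ofNat]
    have e2 : (18 : PowerSeries ℚ) * C (1/18) = 1 := by
      rw [show (18 : PowerSeries ℚ) = C 18 from (map_ofNat C 18).symm, ← map_mul,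
        show (18 * (1/18) : ℚ) = 1 by norm_num, map_one]
    have e3 : (18 : PowerSeries ℚ) * C (1/3) = 6 := by
      rw [show (18 : PowerSeries ℚ) = C 18 from (map_ofNat C 18).symm, ← map_mul,
        show (18 * (1/3) : ℚ) = 6 by norm_num, map_ofNat]
    linear_combination (-18 : PowerSeries ℚ) * heq + a^2 * e1 + a * e2 - X * e3

lemma uniq_v (v v' : PowerSeries ℚ) (h0 : constantCoeff v = 0)
    (hv : 6 * X = (1 - 9 * v + 18 * v ^ 2) * v)
    (h0' : constantCoeff v' = 0)
    (hv' : 6 * X = (1 - 9 * v' + 18 * v' ^ 2) * v') : v = v' := by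
  have key : (v - v') * (1 - 9 * (v + v') + 18 * (v^2 + v*v' + v'^2)) = 0 := by
    linear_combination hv' - hv
  have hne : (1 - 9 * (v + v') + 18 * (v^2 + v*v' + v'^2)) ≠ 0 := by
    intro h
    have := congrArg (constantCoeff) h
    simp only [map_add, map_sub, map_mul, map_pow, map_one, map_zero, h0, h0', map_ofNat] at this
    norm_num at this
  rcases mul_eq_zero.mp key with h | h
  · exact sub_eq_zero.mp h
  · exact absurd h hne

noncomputable def D : PowerSeries ℚ → PowerSeries ℚ := PowerSeries.derivativeFun

theorem stmt0 :
    (∃! v : PowerSeries ℚ, constantCoeff v = 0 ∧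
        6 * X = (1 - 9 * v + 18 * v ^ 2) * v) ∧
    (∀ v : PowerSeries ℚ, constantCoeff v = 0 →
      6 * X = (1 - 9 * v + 18 * v ^ 2) * v →
      coeff 1 v = 6 ∧ coeff 2 v = 324 ∧ coeff 3 v = 31104 ∧
      ∀ w : PowerSeries ℚ, w = X * (1 - 6 * v)⁻¹ →
        (1 - 6 * v) ^ 2 = 1 - 72 * w ∧
        X ^ 2 = w ^ 2 - 72 * w ^ 3 ∧
        constantCoeff w = 0 ∧ coeff 1 w = 1 ∧
        coeff 2 w = 36 ∧ coeff 3 w = 3240 ∧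
        (∀ w' : PowerSeries ℚ, constantCoeff w' = 0 → coeff 1 w' = 1 →
          X ^ 2 = w' ^ 2 - 72 * w' ^ 3 → w' = w) ∧
        w * (1 - 108 * w) * D w = X) := by
  constructor
  · obtain ⟨v0, hv00, hv0eq⟩ := exists_v
    exact ⟨v0, ⟨hv00, hv0eq⟩, fun y hy => uniq_v y v0 hy.1 hy.2 hv00 hv0eq⟩
  · intro v h0 heq
    have e6 : (6 : PowerSeries ℚ) = C 6 := (map_ofNat _ _).symm
    have e9 : (9 : PowerSeries ℚ) = C 9 := (map_ofNat _ _).symm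
    have e18 : (18 : PowerSeries ℚ) = C 18 := (map_ofNat _ _).symm
    have e72 : (72 : PowerSeries ℚ) = C 72 := (map_ofNat _ _).symm
    have h0c : coeff 0 v = 0 := by rwa [coeff_zero_eq_constantCoeff]
    -- v coefficients
    have heqC : C 6 * X = v - C 9 * (v*v) + C 18 * (v*(v*v)) := by
      linear_combination heq - X * e6 - (v*v) * e9 + (v*(v*v)) * e18
    have hc1 := congrArg (coeff 1) heqC
    have hc2 := congrArg (coeff 2) heqC
    have hc3 := congrArg (coeff 3) heqC
    simp [coeff_C_mul, coeff_mul, Finset.Nat.sum_antidiagonal_eq_sum_range_succ_mk,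
      Finset.sum_range_succ, h0c, coeff_X] at hc1 hc2 hc3
    rw [← hc1] at hc2 hc3
    have c2 : coeff 2 v = 324 := by linarith
    rw [c2] at hc3
    have c3 : coeff 3 v = 31104 := by linarith
    refine ⟨hc1.symm, c2, c3, ?_⟩
    intro w hw
    -- basic facts about u = 1 - 6v
    have hcc : constantCoeff (1 - 6 * v) ≠ 0 := by
      simp only [map_sub, map_mul, map_one, h0, map_ofNat]
      norm_num
    have hune : (1 - 6 * v : PowerSeries ℚ) ≠ 0 := fun h => hcc (by rw [h, map_zero])
    have hinv : (1 - 6 * v) * (1 - 6 * v)⁻¹ = 1 := PowerSeries.mul_inv_cancel _ hcc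
    have hwu : w * (1 - 6 * v) = X := by
      rw [hw, mul_assoc, PowerSeries.inv_mul_cancel _ hcc, mul_one]
    have hu3 : (1 - 6 * v) ^ 3 = (1 - 6 * v) - 72 * X := by
      linear_combination (12 : PowerSeries ℚ) * heq
    have h1 : (1 - 6 * v) ^ 2 = 1 - 72 * w := by
      apply mul_right_cancel₀ hune
      linear_combination hu3 + 72 * hwu
    have h2 : X ^ 2 = w ^ 2 - 72 * w ^ 3 := by
      linear_combination w^2 * h1 - (w * (1 - 6 * v) + X) * hwu
    have hw0 : constantCoeff w = 0 := by
      rw [hw, map_mul, constantCoeff_X, zero_mul]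
    have hw0c : coeff 0 w = 0 := by rwa [coeff_zero_eq_constantCoeff]
    -- w coefficients, from X = w - 6 w v
    have hXw : X = w - C 6 * (w * v) := by
      linear_combination -hwu - (w*v) * e6
    have hd1 := congrArg (coeff 1) hXw
    have hd2 := congrArg (coeff 2) hXw
    have hd3 := congrArg (coeff 3) hXw
    simp [coeff_C_mul, coeff_mul, Finset.Nat.sum_antidiagonal_eq_sum_range_succ_mk,
      Finset.sum_range_succ, h0c, hw0c, coeff_X, hc1.symm, c2] at hd1 hd2 hd3
    rw [← hd1] at hd2 hd3
    have d2 : coeff 2 w = 36 := by linarith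
    rw [d2] at hd3
    have d3 : coeff 3 w = 3240 := by linarith
    refine ⟨h1, h2, hw0, hd1.symm, d2, d3, ?_, ?_⟩
    · -- uniqueness of w
      intro w' hw'0 hw'1 heqw'
      have hw'0c : coeff 0 w' = 0 := by rwa [coeff_zero_eq_constantCoeff]
      have key : (w' - w) * ((w' + w) - C 72 * (w'^2 + w'*w + w^2)) = 0 := by
        linear_combination h2 - heqw' + (w' - w) * (w'^2 + w'*w + w^2) * e72
      have hne : ((w' + w) - C 72 * (w'^2 + w'*w + w^2)) ≠ 0 := by
        intro h
        have := congrArg (coeff 1) h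
        simp [coeff_C_mul, map_sub, map_add, map_pow, coeff_mul,
          Finset.Nat.sum_antidiagonal_eq_sum_range_succ_mk, Finset.sum_range_succ,
          hw0c, hw'0c, hw'1, hd1.symm, pow_two] at this
      rcases mul_eq_zero.mp key with h | h
      · exact sub_eq_zero.mp h
      · exact absurd h hne
    · -- derivative identity
      have hd : (d⁄dX ℚ) (X ^ 2) = (d⁄dX ℚ) (w ^ 2 - 72 * w ^ 3) := congrArg _ h2
      simp only [map_sub, Derivation.leibniz, Derivation.leibniz_pow, derivative_X, e72,
        Derivation.map_smul, smul_eq_mul, mul_one, derivative_C] at hd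
      have hD : D w = (d⁄dX ℚ) w := rfl
      rw [hD]
      have h2ne : (2 : PowerSeries ℚ) ≠ 0 := by
        intro h
        have := congrArg (constantCoeff) h
        norm_num [map_ofNat] at this
      apply mul_left_cancel₀ h2ne
      norm_num at hd
      linear_combination -hd - 3 * w ^ 2 * (d⁄dX ℚ) w * e72
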